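/- Let G ⊂ S_d be a transitive imprimitive subgroup containing a transposition (ab), and let H be the subgroup of G generated by the G-conjugates of (ab). If (αβ) ∈ G is any transposition, then α and β lie in the same orbit of H. -/
import Mathlib


/-- A transitive subgroup `G ⊆ S_d` is imprimitive if there is a partition of `{1,...,d}`
into blocks of equal cardinality `e`, `1 < e < d`, permuted by `G`. -/
def IsImprimitive {d : ℕ} (G : Subgroup (Equiv.Perm (Fin d))) : Prop :=
  ∃ (P : Finset (Finset (Fin d))) (e : ℕ), 1 < e ∧ e < d ∧
    (∀ B ∈ P, B.card = e) ∧
    (∀ x : Fin d, ∃! B, B ∈ P ∧ x ∈ B) ∧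
    (∀ g ∈ G, ∀ B ∈ P, B.image ⇑g ∈ P)

/-- `x` and `y` lie in the same orbit of the subgroup `H ⊆ S_d`. -/
def SameOrbit {d : ℕ} (H : Subgroup (Equiv.Perm (Fin d))) (x y : Fin d) : Prop :=
  ∃ σ ∈ H, σ x = y

/-- If `G ⊂ S_d` is transitive imprimitive containing the transposition `(ab)`, and `H`
is the subgroup generated by the `G`-conjugates of `(ab)`, then the two points of any
transposition `(αβ) ∈ G` lie in the same `H`-orbit. -/
theorem transposition_points_same_orbit {d : ℕ} (G : Subgroup (Equiv.Perm (Fin d)))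
    (htrans : ∀ x y : Fin d, ∃ g ∈ G, g x = y)
    (himp : IsImprimitive G)
    (a b : Fin d) (hab : a ≠ b) (hswapG : Equiv.swap a b ∈ G)
    (H : Subgroup (Equiv.Perm (Fin d)))
    (hH : H = Subgroup.closure {σ : Equiv.Perm (Fin d) | ∃ g ∈ G, σ = g⁻¹ * Equiv.swap a b * g})
    (α β : Fin d) (hαβ : α ≠ β) (hmem : Equiv.swap α β ∈ G) :
    SameOrbit H α β := by
  obtain ⟨g, hgG, hga⟩ := htrans a α
  set s := Equiv.swap a b with hs
  -- σ = g s g⁻¹ ∈ H sends α to g b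
  have hσmem : g * s * g⁻¹ ∈ H := by
    rw [hH]
    apply Subgroup.subset_closure
    exact ⟨g⁻¹, inv_mem hgG, by group⟩
  have hσα : (g * s * g⁻¹) α = g b := by
    simp [Equiv.Perm.mul_apply, ← hga, hs, Equiv.swap_apply_left]
  have hxα : g b ≠ α := by
    rw [← hga]
    exact fun h => hab (g.injective h).symm
  by_cases hxβ : g b = β
  · exact ⟨g * s * g⁻¹, hσmem, hσα.trans hxβ⟩
  · set τ := Equiv.swap α β with hτ
    have hσ'mem : τ * (g * s * g⁻¹) * τ ∈ H := by
      rw [hH]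
      apply Subgroup.subset_closure
      refine ⟨g⁻¹ * τ, mul_mem (inv_mem hgG) hmem, ?_⟩
      have : τ⁻¹ = τ := Equiv.swap_inv α β
      rw [mul_inv_rev, inv_inv, this]
      group
    have hσ'β : (τ * (g * s * g⁻¹) * τ) β = g b := by
      have h1 : τ β = α := Equiv.swap_apply_right α β
      have h2 : τ (g b) = g b := Equiv.swap_apply_of_ne_of_ne hxα hxβ
      simp [Equiv.Perm.mul_apply, h1, hσα, h2]
    refine ⟨(τ * (g * s * g⁻¹) * τ)⁻¹ * (g * s * g⁻¹),
      mul_mem (inv_mem hσ'mem) hσmem, ?_⟩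
    rw [Equiv.Perm.mul_apply, hσα, ← hσ'β]
    simp
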